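/- Under the same assumptions, with Â_p⁺ = (Â_pᵀÂ_p)⁻¹Â_pᵀ, we have ‖Â⁺ − Â_p⁺‖₂ ≤ ‖Â⁺‖₂·‖I − Â⁺ÎÂ‖₂/(1 − ‖I − Â⁺ÎÂ‖₂) + ‖Â⁺‖₂²·‖ÎÂ − Â‖₂. -/

import Mathlib

set_option maxHeartbeats 1000000


open Matrix
open scoped Matrix.Norms.L2Operator

lemma aux_isUnit_of_rank_eq {m : ℕ} (M : Matrix (Fin m) (Fin m) ℝ)
    (h : M.rank = m) : IsUnit M := by
  rw [← Matrix.mulVec_surjective_iff_isUnit]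
  have : LinearMap.range M.mulVecLin = ⊤ := by
    apply Submodule.eq_top_of_finrank_eq
    rw [← Matrix.rank, h]
    simp [Module.finrank_fintype_fun_eq_card]
  intro y
  obtain ⟨x, hx⟩ := (LinearMap.range_eq_top.mp this) y
  exact ⟨x, hx⟩

/-- Spectral-norm bound
`‖Â⁺ − Â_p⁺‖ ≤ ‖Â⁺‖·‖I − Â⁺ÎÂ‖/(1 − ‖I − Â⁺ÎÂ‖) + ‖Â⁺‖²·‖ÎÂ − Â‖`. -/
theorem lemma_bound_pseudoinverse_difference
    (n m : ℕ) (A : Matrix (Fin n) (Fin m) ℝ) (Ihat : Matrix (Fin n) (Fin n) ℝ)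
    (hArank : A.rank = m) (hsym : Ihatᵀ = Ihat) (hidem : Ihat * Ihat = Ihat)
    (hinv : IsUnit (Aᵀ * Ihat * A)) :
    let Ap : Matrix (Fin m) (Fin n) ℝ := (Aᵀ * A)⁻¹ * Aᵀ
    let App : Matrix (Fin n) (Fin m) ℝ := Ihat * A
    let Appp : Matrix (Fin m) (Fin n) ℝ := (Appᵀ * App)⁻¹ * Appᵀ
    ‖(1 : Matrix (Fin m) (Fin m) ℝ) - Ap * Ihat * A‖ < 1 →
      ‖Ap - Appp‖ ≤
        ‖Ap‖ * ‖(1 : Matrix (Fin m) (Fin m) ℝ) - Ap * Ihat * A‖ /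
          (1 - ‖(1 : Matrix (Fin m) (Fin m) ℝ) - Ap * Ihat * A‖) +
        ‖Ap‖ ^ 2 * ‖Ihat * A - A‖ := by
  intro Ap App Appp hlt
  set r : ℝ := ‖(1 : Matrix (Fin m) (Fin m) ℝ) - Ap * Ihat * A‖ with hr
  have hr0 : 0 ≤ r := norm_nonneg _
  have hr1 : 0 < 1 - r := by linarith
  -- basic invertibility facts
  have hAA : IsUnit (Aᵀ * A) := by
    apply aux_isUnit_of_rank_eq
    rw [Matrix.rank_transpose_mul_self, hArank]
  have hAAd : IsUnit (Aᵀ * A).det := (Matrix.isUnit_iff_isUnit_det _).mp hAA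
  have hIAd : IsUnit (Aᵀ * Ihat * A).det := (Matrix.isUnit_iff_isUnit_det _).mp hinv
  -- m = 0 case
  rcases Nat.eq_zero_or_pos m with hm | hm
  · subst hm
    have h0 : Ap - Appp = 0 := Subsingleton.elim _ _
    rw [h0, norm_zero]
    have h1 : 0 ≤ ‖Ap‖ * r / (1 - r) :=
      div_nonneg (mul_nonneg (norm_nonneg _) hr0) (le_of_lt hr1)
    have h2 : 0 ≤ ‖Ap‖ ^ 2 * ‖Ihat * A - A‖ :=
      mul_nonneg (pow_nonneg (norm_nonneg _) 2) (norm_nonneg _)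
    linarith
  haveI : NeZero m := ⟨hm.ne'⟩
  -- key identities
  have hAppT : Appᵀ = Aᵀ * Ihat := by
    show (Ihat * A)ᵀ = Aᵀ * Ihat
    rw [Matrix.transpose_mul, hsym]
  have hAppTApp : Appᵀ * App = Aᵀ * Ihat * A := by
    show Appᵀ * (Ihat * A) = Aᵀ * Ihat * A
    rw [hAppT, ← Matrix.mul_assoc, Matrix.mul_assoc Aᵀ, hidem]
  have hApppEq : Appp = (Aᵀ * Ihat * A)⁻¹ * (Aᵀ * Ihat) := by
    show (Appᵀ * App)⁻¹ * Appᵀ = _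
    rw [hAppTApp, hAppT]
  -- B and its inverse
  set B : Matrix (Fin m) (Fin m) ℝ := Ap * Ihat * A with hB
  have hBeq : B = (Aᵀ * A)⁻¹ * (Aᵀ * Ihat * A) := by
    rw [hB]
    show (Aᵀ * A)⁻¹ * Aᵀ * Ihat * A = _
    rw [Matrix.mul_assoc, Matrix.mul_assoc, Matrix.mul_assoc]
  have hBunit : IsUnit B.det := by
    rw [hBeq, Matrix.det_mul]
    exact ((Matrix.isUnit_nonsing_inv_det_iff.mpr hAAd).mul hIAd)
  have hBinv : B⁻¹ = (Aᵀ * Ihat * A)⁻¹ * (Aᵀ * A) := by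
    rw [hBeq, Matrix.mul_inv_rev, Matrix.nonsing_inv_nonsing_inv _ hAAd]
  have hApppB : Appp = B⁻¹ * (Ap * Ihat) := by
    rw [hApppEq, hBinv]
    show _ = (Aᵀ * Ihat * A)⁻¹ * (Aᵀ * A) * ((Aᵀ * A)⁻¹ * Aᵀ * Ihat)
    simp only [← Matrix.mul_assoc]
    rw [Matrix.mul_assoc ((Aᵀ * Ihat * A)⁻¹) Aᵀ A, Matrix.mul_nonsing_inv_cancel_right _ _ hAAd]
  -- Ap * Apᵀ = (Aᵀ A)⁻¹
  have hApT : Apᵀ = A * (Aᵀ * A)⁻¹ := by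
    show ((Aᵀ * A)⁻¹ * Aᵀ)ᵀ = _
    rw [Matrix.transpose_mul, Matrix.transpose_transpose, Matrix.transpose_nonsing_inv,
      Matrix.transpose_mul, Matrix.transpose_transpose]
  have hApAp : Ap * Apᵀ = (Aᵀ * A)⁻¹ := by
    rw [hApT]
    show (Aᵀ * A)⁻¹ * Aᵀ * (A * (Aᵀ * A)⁻¹) = _
    simp only [← Matrix.mul_assoc]
    rw [Matrix.mul_assoc ((Aᵀ * A)⁻¹) Aᵀ A, Matrix.nonsing_inv_mul _ hAAd, Matrix.one_mul]
  -- decomposition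
  have hdecomp : Ap - Appp = Ap * (1 - Ihat) + (1 - B⁻¹) * (Ap * Ihat) := by
    rw [hApppB, Matrix.mul_sub, Matrix.sub_mul, Matrix.mul_one, Matrix.one_mul,
      ← Matrix.mul_assoc]
    abel
  -- first term identity
  have e1 : (Ap * Apᵀ) * (Ihat * A - A)ᵀ = Ap * Ihat - Ap := by
    rw [hApAp, Matrix.transpose_sub, Matrix.transpose_mul, hsym, Matrix.mul_sub]
    show (Aᵀ * A)⁻¹ * (Aᵀ * Ihat) - (Aᵀ * A)⁻¹ * Aᵀ = (Aᵀ * A)⁻¹ * Aᵀ * Ihat - (Aᵀ * A)⁻¹ * Aᵀ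
    rw [Matrix.mul_assoc]
  have hT1id : Ap * (1 - Ihat) = -((Ap * Apᵀ) * (Ihat * A - A)ᵀ) := by
    rw [e1]
    rw [Matrix.mul_sub, Matrix.mul_one]
    abel
  -- norm facts over ℝ: transpose norm
  have hnormT : ∀ {p q : ℕ} (M : Matrix (Fin p) (Fin q) ℝ), ‖Mᵀ‖ = ‖M‖ := by
    intro p q M
    rw [← Matrix.conjTranspose_eq_transpose_of_trivial]
    exact Matrix.l2_opNorm_conjTranspose M
  -- ‖Ihat‖ ≤ 1
  have hIle : ‖Ihat‖ ≤ 1 := by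
    have h1 : ‖Ihat‖ * ‖Ihat‖ = ‖Ihat‖ := by
      rw [← Matrix.l2_opNorm_conjTranspose_mul_self,
        Matrix.conjTranspose_eq_transpose_of_trivial, hsym, hidem]
    nlinarith [norm_nonneg Ihat]
  -- bound on ‖1 - B⁻¹‖
  have hBinv1 : (1 : Matrix (Fin m) (Fin m) ℝ) - B⁻¹ = B⁻¹ * (B - 1) := by
    rw [Matrix.mul_sub, Matrix.mul_one, Matrix.nonsing_inv_mul _ hBunit]
  haveI : Nontrivial (Matrix (Fin m) (Fin m) ℝ) := Matrix.nonempty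
  have hnorm1 : ‖(1 : Matrix (Fin m) (Fin m) ℝ)‖ = 1 := CStarRing.norm_one
  have hx : ‖(1 : Matrix (Fin m) (Fin m) ℝ) - B⁻¹‖ ≤ r / (1 - r) := by
    set x : ℝ := ‖(1 : Matrix (Fin m) (Fin m) ℝ) - B⁻¹‖ with hxdef
    have h1 : ‖B⁻¹‖ ≤ 1 + x := by
      calc ‖B⁻¹‖ = ‖(1 : Matrix (Fin m) (Fin m) ℝ) - (1 - B⁻¹)‖ := by
            congr 1; abel
        _ ≤ ‖(1 : Matrix (Fin m) (Fin m) ℝ)‖ + ‖(1 : Matrix (Fin m) (Fin m) ℝ) - B⁻¹‖ :=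
            norm_sub_le _ _
        _ = 1 + x := by rw [hnorm1]
    have h2 : x ≤ ‖B⁻¹‖ * r := by
      calc x = ‖B⁻¹ * (B - 1)‖ := by rw [hxdef, hBinv1]
        _ ≤ ‖B⁻¹‖ * ‖B - 1‖ := Matrix.l2_opNorm_mul _ _
        _ = ‖B⁻¹‖ * r := by rw [← norm_neg (B - 1)]; congr 2; abel
    rw [le_div_iff₀ hr1]
    nlinarith [norm_nonneg ((1 : Matrix (Fin m) (Fin m) ℝ) - B⁻¹)]
  -- assemble
  have h1 : ‖Ap - Appp‖ ≤ ‖Ap * (1 - Ihat)‖ + ‖(1 - B⁻¹) * (Ap * Ihat)‖ := by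
    rw [hdecomp]; exact norm_add_le _ _
  have h2 : ‖Ap * (1 - Ihat)‖ ≤ ‖Ap‖ ^ 2 * ‖Ihat * A - A‖ := by
    calc ‖Ap * (1 - Ihat)‖ = ‖(Ap * Apᵀ) * (Ihat * A - A)ᵀ‖ := by rw [hT1id, norm_neg]
      _ ≤ ‖Ap * Apᵀ‖ * ‖(Ihat * A - A)ᵀ‖ := Matrix.l2_opNorm_mul _ _
      _ ≤ (‖Ap‖ * ‖Apᵀ‖) * ‖(Ihat * A - A)ᵀ‖ :=
          mul_le_mul_of_nonneg_right (Matrix.l2_opNorm_mul _ _) (norm_nonneg _)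
      _ = ‖Ap‖ ^ 2 * ‖Ihat * A - A‖ := by rw [hnormT, hnormT]; ring
  have h3 : ‖(1 - B⁻¹) * (Ap * Ihat)‖ ≤ ‖(1 : Matrix (Fin m) (Fin m) ℝ) - B⁻¹‖ * ‖Ap‖ := by
    calc ‖(1 - B⁻¹) * (Ap * Ihat)‖ ≤ ‖(1 : Matrix (Fin m) (Fin m) ℝ) - B⁻¹‖ * ‖Ap * Ihat‖ :=
          Matrix.l2_opNorm_mul _ _
      _ ≤ ‖(1 : Matrix (Fin m) (Fin m) ℝ) - B⁻¹‖ * (‖Ap‖ * ‖Ihat‖) :=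
          mul_le_mul_of_nonneg_left (Matrix.l2_opNorm_mul _ _) (norm_nonneg _)
      _ ≤ ‖(1 : Matrix (Fin m) (Fin m) ℝ) - B⁻¹‖ * ‖Ap‖ := by
          apply mul_le_mul_of_nonneg_left _ (norm_nonneg _)
          nlinarith [norm_nonneg Ap]
  have h4 : ‖(1 : Matrix (Fin m) (Fin m) ℝ) - B⁻¹‖ * ‖Ap‖ ≤ r / (1 - r) * ‖Ap‖ :=
    mul_le_mul_of_nonneg_right hx (norm_nonneg _)
  have hgoal : ‖Ap‖ * r / (1 - r) = r / (1 - r) * ‖Ap‖ := by ring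
  rw [hgoal]
  linarith
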